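/- If X, Y are sequences of length n - u and n + u respectively (|u| ≤ n) drawn i.i.d. from the same distribution on a finite alphabet, then E[L(X_1,...,X_{n-u}; Y_1,...,Y_{n+u})] ≤ (1/2)·E[L(X_1,...,X_{2n}; Y_1,...,Y_{2n})]. -/

import Mathlib

open MeasureTheory ProbabilityTheory Real Filter

/-- Optimal alignment score of two sequences of the same length `m`,
with pairwise score `S` and gap price `δ` (a gap is a pair of indels). -/
noncomputable def alignScore {𝔸 : Type*} (S : 𝔸 → 𝔸 → ℝ) (δ : ℝ) {m : ℕ}
    (x y : Fin m → 𝔸) : ℝ :=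
  sSup {s : ℝ | ∃ (k : ℕ) (al : Fin k → Fin m) (mu : Fin k → Fin m),
    StrictMono al ∧ StrictMono mu ∧
    s = (∑ i, S (x (al i)) (y (mu i))) + δ * ((m : ℝ) - (k : ℝ))}

/-- Optimal alignment score for sequences of possibly different lengths `p`, `q`;
the gap count is `((p-k)+(q-k))/2`. -/
noncomputable def alignScore2 {𝔸 : Type*} (S : 𝔸 → 𝔸 → ℝ) (δ : ℝ) {p q : ℕ}
    (x : Fin p → 𝔸) (y : Fin q → 𝔸) : ℝ :=
  sSup {s : ℝ | ∃ (k : ℕ) (al : Fin k → Fin p) (mu : Fin k → Fin q),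
    StrictMono al ∧ StrictMono mu ∧
    s = (∑ i, S (x (al i)) (y (mu i))) +
      δ * ((((p : ℝ) - (k : ℝ)) + ((q : ℝ) - (k : ℝ))) / 2)}

section AuxCombinatorics

/-- The defining set of `alignScore2`. -/
def alignSet {𝔸 : Type*} (S : 𝔸 → 𝔸 → ℝ) (δ : ℝ) {p q : ℕ}
    (x : Fin p → 𝔸) (y : Fin q → 𝔸) : Set ℝ :=
  {s : ℝ | ∃ (k : ℕ) (al : Fin k → Fin p) (mu : Fin k → Fin q),
    StrictMono al ∧ StrictMono mu ∧
    s = (∑ i, S (x (al i)) (y (mu i))) +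
      δ * ((((p : ℝ) - (k : ℝ)) + ((q : ℝ) - (k : ℝ))) / 2)}

lemma alignScore2_eq_sSup {𝔸 : Type*} (S : 𝔸 → 𝔸 → ℝ) (δ : ℝ) {p q : ℕ}
    (x : Fin p → 𝔸) (y : Fin q → 𝔸) :
    alignScore2 S δ x y = sSup (alignSet S δ x y) := rfl

lemma alignSet_nonempty {𝔸 : Type*} (S : 𝔸 → 𝔸 → ℝ) (δ : ℝ) {p q : ℕ}
    (x : Fin p → 𝔸) (y : Fin q → 𝔸) : (alignSet S δ x y).Nonempty := by
  refine ⟨_, 0, Fin.elim0, Fin.elim0, ?_, ?_, rfl⟩ <;> exact fun a => a.elim0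

lemma alignSet_bddAbove {𝔸 : Type*} [Fintype 𝔸] [Nonempty 𝔸]
    (S : 𝔸 → 𝔸 → ℝ) (δ : ℝ) {p q : ℕ}
    (x : Fin p → 𝔸) (y : Fin q → 𝔸) : BddAbove (alignSet S δ x y) := by
  obtain ⟨ab, hab⟩ := Finite.exists_max (fun ab : 𝔸 × 𝔸 => S ab.1 ab.2)
  set B : ℝ := max (S ab.1 ab.2) 0 with hB
  have hB0 : 0 ≤ B := le_max_right _ _
  have hSB : ∀ a b, S a b ≤ B := fun a b => le_trans (hab (a, b)) (le_max_left _ _)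
  refine ⟨(p : ℝ) * B + |δ| * ((p : ℝ) + (q : ℝ)), ?_⟩
  rintro s ⟨k, al, mu, hal, hmu, rfl⟩
  have hkp : k ≤ p := by
    have := Fintype.card_le_of_injective al hal.injective
    simpa using this
  have hkq : k ≤ q := by
    have := Fintype.card_le_of_injective mu hmu.injective
    simpa using this
  have hsum : (∑ i, S (x (al i)) (y (mu i))) ≤ (k : ℝ) * B := by
    calc (∑ i, S (x (al i)) (y (mu i))) ≤ ∑ _i : Fin k, B :=
          Finset.sum_le_sum fun i _ => hSB _ _
      _ = (k : ℝ) * B := by simp [mul_comm]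
  have hkp' : (k : ℝ) ≤ p := by exact_mod_cast hkp
  have hkq' : (k : ℝ) ≤ q := by exact_mod_cast hkq
  have hk0 : (0 : ℝ) ≤ k := by positivity
  have hgap : δ * ((((p : ℝ) - (k : ℝ)) + ((q : ℝ) - (k : ℝ))) / 2)
      ≤ |δ| * ((p : ℝ) + (q : ℝ)) := by
    have ht0 : (0 : ℝ) ≤ (((p : ℝ) - (k : ℝ)) + ((q : ℝ) - (k : ℝ))) / 2 := by linarith
    have ht1 : (((p : ℝ) - (k : ℝ)) + ((q : ℝ) - (k : ℝ))) / 2 ≤ (p : ℝ) + (q : ℝ) := by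
      linarith
    calc δ * ((((p : ℝ) - (k : ℝ)) + ((q : ℝ) - (k : ℝ))) / 2)
        ≤ |δ| * ((((p : ℝ) - (k : ℝ)) + ((q : ℝ) - (k : ℝ))) / 2) :=
          mul_le_mul_of_nonneg_right (le_abs_self δ) ht0
      _ ≤ |δ| * ((p : ℝ) + (q : ℝ)) :=
          mul_le_mul_of_nonneg_left ht1 (abs_nonneg δ)
  have : (k : ℝ) * B ≤ (p : ℝ) * B := mul_le_mul_of_nonneg_right hkp' hB0
  linarith

lemma alignScore_eq_alignScore2 {𝔸 : Type*} (S : 𝔸 → 𝔸 → ℝ) (δ : ℝ) {m : ℕ}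
    (x y : Fin m → 𝔸) : alignScore S δ x y = alignScore2 S δ x y := by
  unfold alignScore alignScore2
  congr 1
  ext s
  constructor <;> rintro ⟨k, al, mu, h1, h2, rfl⟩ <;>
    exact ⟨k, al, mu, h1, h2, by ring⟩

lemma alignScore2_symm {𝔸 : Type*} (S : 𝔸 → 𝔸 → ℝ) (hsymm : ∀ a b, S a b = S b a)
    (δ : ℝ) {p q : ℕ} (x : Fin p → 𝔸) (y : Fin q → 𝔸) :
    alignScore2 S δ x y = alignScore2 S δ y x := by
  unfold alignScore2
  congr 1
  ext s
  constructor <;> rintro ⟨k, al, mu, h1, h2, rfl⟩ <;>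
    refine ⟨k, mu, al, h2, h1, ?_⟩ <;>
    · rw [Finset.sum_congr rfl (fun i _ => hsymm _ _)]
      ring

lemma fin_addCases_strictMono {N k1 k2 : ℕ} {f : Fin k1 → Fin N} {g : Fin k2 → Fin N}
    (hf : StrictMono f) (hg : StrictMono g) (hfg : ∀ i j, f i < g j) :
    StrictMono (Fin.addCases f g : Fin (k1 + k2) → Fin N) := by
  intro a b hab
  have hab' : (a : ℕ) < (b : ℕ) := hab
  rcases Nat.lt_or_ge (a : ℕ) k1 with ha | ha <;> rcases Nat.lt_or_ge (b : ℕ) k1 with hb | hb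
  · have ea : a = Fin.castAdd k2 ⟨(a : ℕ), ha⟩ := Fin.ext rfl
    have eb : b = Fin.castAdd k2 ⟨(b : ℕ), hb⟩ := Fin.ext rfl
    rw [ea, eb]
    simp only [Fin.addCases_left]
    exact hf hab'
  · have ea : a = Fin.castAdd k2 ⟨(a : ℕ), ha⟩ := Fin.ext rfl
    have eb : b = Fin.natAdd k1 ⟨(b : ℕ) - k1, by have := b.isLt; omega⟩ :=
      Fin.ext (by simp; omega)
    rw [ea, eb]
    simp only [Fin.addCases_left, Fin.addCases_right]
    exact hfg _ _
  · omega
  · have ea : a = Fin.natAdd k1 ⟨(a : ℕ) - k1, by have := a.isLt; omega⟩ :=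
      Fin.ext (by simp; omega)
    have eb : b = Fin.natAdd k1 ⟨(b : ℕ) - k1, by have := b.isLt; omega⟩ :=
      Fin.ext (by simp; omega)
    rw [ea, eb]
    simp only [Fin.addCases_right]
    exact hg (by simp [Fin.lt_def]; omega)

lemma fin_addCases_injective {p q : ℕ} {α : Type*} {f : Fin p → α} {g : Fin q → α}
    (hf : Function.Injective f) (hg : Function.Injective g)
    (hfg : ∀ i j, f i ≠ g j) :
    Function.Injective (Fin.addCases f g : Fin (p + q) → α) := by
  intro a b hab
  rcases Nat.lt_or_ge (a : ℕ) p with ha | ha <;> rcases Nat.lt_or_ge (b : ℕ) p with hb | hb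
  · have ea : a = Fin.castAdd q ⟨(a : ℕ), ha⟩ := Fin.ext rfl
    have eb : b = Fin.castAdd q ⟨(b : ℕ), hb⟩ := Fin.ext rfl
    rw [ea, eb] at hab
    simp only [Fin.addCases_left] at hab
    rw [ea, eb]
    exact congrArg _ (hf hab)
  · have ea : a = Fin.castAdd q ⟨(a : ℕ), ha⟩ := Fin.ext rfl
    have eb : b = Fin.natAdd p ⟨(b : ℕ) - p, by have := b.isLt; omega⟩ :=
      Fin.ext (by simp; omega)
    rw [ea, eb] at hab
    simp only [Fin.addCases_left, Fin.addCases_right] at hab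
    exact absurd hab (hfg _ _)
  · have ea : a = Fin.natAdd p ⟨(a : ℕ) - p, by have := a.isLt; omega⟩ :=
      Fin.ext (by simp; omega)
    have eb : b = Fin.castAdd q ⟨(b : ℕ), hb⟩ := Fin.ext rfl
    rw [ea, eb] at hab
    simp only [Fin.addCases_left, Fin.addCases_right] at hab
    exact absurd hab.symm (hfg _ _)
  · have ea : a = Fin.natAdd p ⟨(a : ℕ) - p, by have := a.isLt; omega⟩ :=
      Fin.ext (by simp; omega)
    have eb : b = Fin.natAdd p ⟨(b : ℕ) - p, by have := b.isLt; omega⟩ :=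
      Fin.ext (by simp; omega)
    rw [ea, eb] at hab
    simp only [Fin.addCases_right] at hab
    have := hg hab
    rw [ea, eb, this]

lemma alignSet_add_mem {𝔸 : Type*} (S : 𝔸 → 𝔸 → ℝ) (δ : ℝ) {N p q : ℕ}
    (h : p + q = N) (x y : Fin N → 𝔸) {s1 s2 : ℝ}
    (hs1 : s1 ∈ alignSet S δ (fun i : Fin p => x ⟨(i : ℕ), by have := i.isLt; omega⟩)
      (fun i : Fin q => y ⟨(i : ℕ), by have := i.isLt; omega⟩))
    (hs2 : s2 ∈ alignSet S δ (fun i : Fin q => x ⟨p + (i : ℕ), by have := i.isLt; omega⟩)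
      (fun i : Fin p => y ⟨q + (i : ℕ), by have := i.isLt; omega⟩)) :
    s1 + s2 ∈ alignSet S δ x y := by
  obtain ⟨k1, al1, mu1, hal1, hmu1, rfl⟩ := hs1
  obtain ⟨k2, al2, mu2, hal2, hmu2, rfl⟩ := hs2
  refine ⟨k1 + k2,
    Fin.addCases (fun i => ⟨(al1 i : ℕ), by have := (al1 i).isLt; omega⟩)
      (fun j => ⟨p + (al2 j : ℕ), by have := (al2 j).isLt; omega⟩),
    Fin.addCases (fun i => ⟨(mu1 i : ℕ), by have := (mu1 i).isLt; omega⟩)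
      (fun j => ⟨q + (mu2 j : ℕ), by have := (mu2 j).isLt; omega⟩),
    ?_, ?_, ?_⟩
  · refine fin_addCases_strictMono ?_ ?_ ?_
    · intro i j hij
      exact Fin.mk_lt_mk.mpr (hal1 hij)
    · intro i j hij
      have h2 : (al2 i : ℕ) < (al2 j : ℕ) := hal2 hij
      exact Fin.mk_lt_mk.mpr (by omega)
    · intro i j
      have h2 : (al1 i : ℕ) < p := (al1 i).isLt
      exact Fin.mk_lt_mk.mpr (by omega)
  · refine fin_addCases_strictMono ?_ ?_ ?_
    · intro i j hij
      exact Fin.mk_lt_mk.mpr (hmu1 hij)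
    · intro i j hij
      have h2 : (mu2 i : ℕ) < (mu2 j : ℕ) := hmu2 hij
      exact Fin.mk_lt_mk.mpr (by omega)
    · intro i j
      have h2 : (mu1 i : ℕ) < q := (mu1 i).isLt
      exact Fin.mk_lt_mk.mpr (by omega)
  · rw [Fin.sum_univ_add]
    simp only [Fin.addCases_left, Fin.addCases_right]
    have hc : (p : ℝ) + (q : ℝ) = (N : ℝ) := by exact_mod_cast congrArg Nat.cast h
    push_cast
    linear_combination δ * hc

lemma alignScore2_superadd {𝔸 : Type*} [Fintype 𝔸] [Nonempty 𝔸]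
    (S : 𝔸 → 𝔸 → ℝ) (δ : ℝ) {N p q : ℕ} (h : p + q = N) (x y : Fin N → 𝔸) :
    alignScore2 S δ (fun i : Fin p => x ⟨(i : ℕ), by have := i.isLt; omega⟩)
        (fun i : Fin q => y ⟨(i : ℕ), by have := i.isLt; omega⟩)
      + alignScore2 S δ (fun i : Fin q => x ⟨p + (i : ℕ), by have := i.isLt; omega⟩)
        (fun i : Fin p => y ⟨q + (i : ℕ), by have := i.isLt; omega⟩)
      ≤ alignScore2 S δ x y := by
  rw [alignScore2_eq_sSup, alignScore2_eq_sSup, alignScore2_eq_sSup]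
  have hbdd := alignSet_bddAbove S δ x y
  have hne1 := alignSet_nonempty S δ
    (fun i : Fin p => x ⟨(i : ℕ), by have := i.isLt; omega⟩)
    (fun i : Fin q => y ⟨(i : ℕ), by have := i.isLt; omega⟩)
  have hne2 := alignSet_nonempty S δ
    (fun i : Fin q => x ⟨p + (i : ℕ), by have := i.isLt; omega⟩)
    (fun i : Fin p => y ⟨q + (i : ℕ), by have := i.isLt; omega⟩)
  have h1 : sSup (alignSet S δ
      (fun i : Fin p => x ⟨(i : ℕ), by have := i.isLt; omega⟩)
      (fun i : Fin q => y ⟨(i : ℕ), by have := i.isLt; omega⟩)) ≤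
      sSup (alignSet S δ x y) - sSup (alignSet S δ
        (fun i : Fin q => x ⟨p + (i : ℕ), by have := i.isLt; omega⟩)
        (fun i : Fin p => y ⟨q + (i : ℕ), by have := i.isLt; omega⟩)) := by
    refine csSup_le hne1 fun s1 hs1 => ?_
    have h2 : sSup (alignSet S δ
        (fun i : Fin q => x ⟨p + (i : ℕ), by have := i.isLt; omega⟩)
        (fun i : Fin p => y ⟨q + (i : ℕ), by have := i.isLt; omega⟩)) ≤
        sSup (alignSet S δ x y) - s1 := by
      refine csSup_le hne2 fun s2 hs2 => ?_
      have := le_csSup hbdd (alignSet_add_mem S δ h x y hs1 hs2)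
      linarith
    linarith
  linarith

end AuxCombinatorics

section AuxProbability

variable {𝔸 : Type*} [Fintype 𝔸] [MeasurableSpace 𝔸] [MeasurableSingletonClass 𝔸]
  {Ω : Type*} [MeasurableSpace Ω] {Pr : Measure Ω}

lemma sum_indicator_eq (Z : ℕ ⊕ ℕ → Ω → 𝔸) {m : ℕ} (e : Fin m → ℕ ⊕ ℕ)
    (G : (Fin m → 𝔸) → ℝ) (ω : Ω) :
    ∑ v : Fin m → 𝔸, Set.indicator (⋂ i, Z (e i) ⁻¹' {v i}) (fun _ => G v) ω
      = G (fun i => Z (e i) ω) := by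
  classical
  rw [Finset.sum_eq_single (fun i => Z (e i) ω)]
  · rw [Set.indicator_of_mem]
    simp [Set.mem_iInter]
  · intro v _ hv
    apply Set.indicator_of_notMem
    intro hmem
    simp only [Set.mem_iInter, Set.mem_preimage, Set.mem_singleton_iff] at hmem
    exact hv (funext fun i => (hmem i).symm)
  · simp

lemma comp_integrable [IsFiniteMeasure Pr] (Z : ℕ ⊕ ℕ → Ω → 𝔸)
    (hmeas : ∀ i, Measurable (Z i)) {m : ℕ} (e : Fin m → ℕ ⊕ ℕ)
    (G : (Fin m → 𝔸) → ℝ) :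
    Integrable (fun ω => G (fun i => Z (e i) ω)) Pr := by
  have hA : ∀ v : Fin m → 𝔸, MeasurableSet (⋂ i, Z (e i) ⁻¹' {v i}) :=
    fun v => MeasurableSet.iInter fun i => (hmeas (e i)) (measurableSet_singleton _)
  have hrep : (fun ω => G (fun i => Z (e i) ω)) =
      fun ω => ∑ v : Fin m → 𝔸,
        Set.indicator (⋂ i, Z (e i) ⁻¹' {v i}) (fun _ => G v) ω :=
    funext fun ω => (sum_indicator_eq Z e G ω).symm
  rw [hrep]
  exact integrable_finset_sum _ fun v _ => (integrable_const _).indicator (hA v)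

lemma meas_iInter_eq_prod (Z : ℕ ⊕ ℕ → Ω → 𝔸)
    (hmeas : ∀ i, Measurable (Z i))
    (hindep : iIndepFun Z Pr)
    (hid : ∀ i j, Measure.map (Z i) Pr = Measure.map (Z j) Pr)
    {m : ℕ} (e : Fin m → ℕ ⊕ ℕ) (he : Function.Injective e) (v : Fin m → 𝔸) :
    Pr (⋂ i, Z (e i) ⁻¹' {v i})
      = ∏ i, (Measure.map (Z (Sum.inl 0)) Pr) {v i} := by
  classical
  set f' : ℕ ⊕ ℕ → Set Ω :=
    fun j => if h : ∃ i, e i = j then Z j ⁻¹' {v h.choose} else Set.univ with hf'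
  have hfe : ∀ i, f' (e i) = Z (e i) ⁻¹' {v i} := by
    intro i
    have hex : ∃ i', e i' = e i := ⟨i, rfl⟩
    have hch : hex.choose = i := he hex.choose_spec
    simp only [hf', dif_pos hex, hch]
  have h1 : (⋂ i, Z (e i) ⁻¹' {v i}) = ⋂ j ∈ Finset.image e Finset.univ, f' j := by
    ext ω
    simp only [Set.mem_iInter, Finset.mem_image, Finset.mem_univ, true_and]
    constructor
    · rintro h j ⟨i, rfl⟩
      rw [hfe]
      exact h i
    · intro h i
      rw [← hfe]
      exact h (e i) ⟨i, rfl⟩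
  have h2 : Pr (⋂ j ∈ Finset.image e Finset.univ, f' j)
      = ∏ j ∈ Finset.image e Finset.univ, Pr (f' j) := by
    refine hindep.meas_biInter ?_
    intro j hj
    simp only [Finset.mem_image, Finset.mem_univ, true_and] at hj
    obtain ⟨i, rfl⟩ := hj
    rw [hfe, MeasurableSpace.measurableSet_comap]
    exact ⟨{v i}, measurableSet_singleton _, rfl⟩
  rw [h1, h2, Finset.prod_image (fun a _ b _ hab => he hab)]
  refine Finset.prod_congr rfl fun i _ => ?_
  rw [hfe, hid (Sum.inl 0) (e i), Measure.map_apply (hmeas _) (measurableSet_singleton _)]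

lemma comp_integral_eq [IsProbabilityMeasure Pr] (Z : ℕ ⊕ ℕ → Ω → 𝔸)
    (hmeas : ∀ i, Measurable (Z i))
    (hindep : iIndepFun Z Pr)
    (hid : ∀ i j, Measure.map (Z i) Pr = Measure.map (Z j) Pr)
    {m : ℕ} (e : Fin m → ℕ ⊕ ℕ) (he : Function.Injective e)
    (G : (Fin m → 𝔸) → ℝ) :
    (∫ ω, G (fun i => Z (e i) ω) ∂Pr)
      = ∑ v : Fin m → 𝔸, G v * (∏ i, (Measure.map (Z (Sum.inl 0)) Pr) {v i}).toReal := by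
  have hA : ∀ v : Fin m → 𝔸, MeasurableSet (⋂ i, Z (e i) ⁻¹' {v i}) :=
    fun v => MeasurableSet.iInter fun i => (hmeas (e i)) (measurableSet_singleton _)
  have hrep : (fun ω => G (fun i => Z (e i) ω)) =
      fun ω => ∑ v : Fin m → 𝔸,
        Set.indicator (⋂ i, Z (e i) ⁻¹' {v i}) (fun _ => G v) ω :=
    funext fun ω => (sum_indicator_eq Z e G ω).symm
  rw [hrep, integral_finset_sum _ (fun v _ => (integrable_const _).indicator (hA v))]
  refine Finset.sum_congr rfl fun v _ => ?_
  rw [integral_indicator_const _ (hA v), measureReal_def,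
    meas_iInter_eq_prod Z hmeas hindep hid e he v, smul_eq_mul, mul_comm]

lemma exchangeable_integral [IsProbabilityMeasure Pr] (Z : ℕ ⊕ ℕ → Ω → 𝔸)
    (hmeas : ∀ i, Measurable (Z i))
    (hindep : iIndepFun Z Pr)
    (hid : ∀ i j, Measure.map (Z i) Pr = Measure.map (Z j) Pr)
    {m : ℕ} (e e' : Fin m → ℕ ⊕ ℕ) (he : Function.Injective e)
    (he' : Function.Injective e') (G : (Fin m → 𝔸) → ℝ) :
    (∫ ω, G (fun i => Z (e i) ω) ∂Pr) = ∫ ω, G (fun i => Z (e' i) ω) ∂Pr := by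
  rw [comp_integral_eq Z hmeas hindep hid e he G,
    comp_integral_eq Z hmeas hindep hid e' he' G]

end AuxProbability

/-- For i.i.d. sequences, `E[L(X_1..X_{n-u}; Y_1..Y_{n+u})] ≤ (1/2)E[L_{2n}]`;
we write `p = n - u`, `q = n + u`, so `p + q = 2n`. -/
theorem expected_unbalanced_score_le_half
    {𝔸 : Type*} [Fintype 𝔸] [Nonempty 𝔸] [MeasurableSpace 𝔸] [MeasurableSingletonClass 𝔸]
    {Ω : Type*} [MeasurableSpace Ω] (Pr : Measure Ω) [IsProbabilityMeasure Pr]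
    (Z : ℕ ⊕ ℕ → Ω → 𝔸) (hmeas : ∀ i, Measurable (Z i))
    (hindep : iIndepFun Z Pr)
    (hid : ∀ i j, Measure.map (Z i) Pr = Measure.map (Z j) Pr)
    (S : 𝔸 → 𝔸 → ℝ) (hsymm : ∀ a b, S a b = S b a) (hpos : ∀ a b, 0 ≤ S a b) (δ : ℝ)
    (n p q : ℕ) (hn : 1 ≤ n) (hpq : p + q = 2 * n) :
    (∫ ω, alignScore2 S δ (fun i : Fin p => Z (Sum.inl ((i : ℕ) + 1)) ω)
        (fun i : Fin q => Z (Sum.inr ((i : ℕ) + 1)) ω) ∂Pr) ≤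
      (1 / 2) *
        ∫ ω, alignScore S δ (fun i : Fin (2 * n) => Z (Sum.inl ((i : ℕ) + 1)) ω)
          (fun i : Fin (2 * n) => Z (Sum.inr ((i : ℕ) + 1)) ω) ∂Pr := by
  classical
  -- the three integrands
  set f1 : Ω → ℝ := fun ω => alignScore2 S δ
    (fun i : Fin p => Z (Sum.inl ((i : ℕ) + 1)) ω)
    (fun i : Fin q => Z (Sum.inr ((i : ℕ) + 1)) ω) with hf1def
  set f2 : Ω → ℝ := fun ω => alignScore2 S δ
    (fun i : Fin q => Z (Sum.inl (p + (i : ℕ) + 1)) ω)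
    (fun i : Fin p => Z (Sum.inr (q + (i : ℕ) + 1)) ω) with hf2def
  set F : Ω → ℝ := fun ω => alignScore2 S δ
    (fun i : Fin (2 * n) => Z (Sum.inl ((i : ℕ) + 1)) ω)
    (fun i : Fin (2 * n) => Z (Sum.inr ((i : ℕ) + 1)) ω) with hFdef
  -- encodings as compositions
  have hint1 : Integrable f1 Pr := by
    have h := comp_integrable (Pr := Pr) Z hmeas
      (Fin.addCases (motive := fun _ => ℕ ⊕ ℕ) (fun i : Fin p => Sum.inl ((i : ℕ) + 1))
        (fun j : Fin q => Sum.inr ((j : ℕ) + 1)))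
      (fun v : Fin (p + q) → 𝔸 => alignScore2 S δ
        (fun i => v (Fin.castAdd q i)) (fun j => v (Fin.natAdd p j)))
    simp only [Fin.addCases_left, Fin.addCases_right] at h
    exact h

  have hint2 : Integrable f2 Pr := by
    have h := comp_integrable (Pr := Pr) Z hmeas
      (Fin.addCases (motive := fun _ => ℕ ⊕ ℕ) (fun i : Fin q => Sum.inl (p + (i : ℕ) + 1))
        (fun j : Fin p => Sum.inr (q + (j : ℕ) + 1)))
      (fun v : Fin (q + p) → 𝔸 => alignScore2 S δ
        (fun i => v (Fin.castAdd p i)) (fun j => v (Fin.natAdd q j)))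
    simp only [Fin.addCases_left, Fin.addCases_right] at h
    exact h

  have hintF : Integrable F Pr := by
    have h := comp_integrable (Pr := Pr) Z hmeas
      (Fin.addCases (motive := fun _ => ℕ ⊕ ℕ) (fun i : Fin (2 * n) => Sum.inl ((i : ℕ) + 1))
        (fun j : Fin (2 * n) => Sum.inr ((j : ℕ) + 1)))
      (fun v : Fin (2 * n + 2 * n) → 𝔸 => alignScore2 S δ
        (fun i => v (Fin.castAdd (2 * n) i)) (fun j => v (Fin.natAdd (2 * n) j)))
    simp only [Fin.addCases_left, Fin.addCases_right] at h
    exact h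

  -- pointwise superadditivity
  have hpoint : ∀ ω, f1 ω + f2 ω ≤ F ω := by
    intro ω
    exact alignScore2_superadd S δ hpq
      (fun i : Fin (2 * n) => Z (Sum.inl ((i : ℕ) + 1)) ω)
      (fun i : Fin (2 * n) => Z (Sum.inr ((i : ℕ) + 1)) ω)
  -- equality of expectations of f2 and f1
  have hswap : ∀ ω, f2 ω = alignScore2 S δ
      (fun i : Fin p => Z (Sum.inr (q + (i : ℕ) + 1)) ω)
      (fun i : Fin q => Z (Sum.inl (p + (i : ℕ) + 1)) ω) := by
    intro ω
    exact alignScore2_symm S hsymm δ _ _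
  have heq : (∫ ω, f2 ω ∂Pr) = ∫ ω, f1 ω ∂Pr := by
    have h1 : (∫ ω, f2 ω ∂Pr) = ∫ ω,
        (fun v : Fin (p + q) → 𝔸 => alignScore2 S δ
          (fun i => v (Fin.castAdd q i)) (fun j => v (Fin.natAdd p j)))
        (fun i => Z ((Fin.addCases (motive := fun _ => ℕ ⊕ ℕ) (fun i : Fin p => Sum.inr (q + (i : ℕ) + 1))
          (fun j : Fin q => Sum.inl (p + (j : ℕ) + 1))) i) ω) ∂Pr := by
      refine integral_congr_ae (Filter.Eventually.of_forall fun ω => ?_)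
      rw [hswap ω]
      simp only [Fin.addCases_left, Fin.addCases_right]
    have h2 : (∫ ω, f1 ω ∂Pr) = ∫ ω,
        (fun v : Fin (p + q) → 𝔸 => alignScore2 S δ
          (fun i => v (Fin.castAdd q i)) (fun j => v (Fin.natAdd p j)))
        (fun i => Z ((Fin.addCases (motive := fun _ => ℕ ⊕ ℕ) (fun i : Fin p => Sum.inl ((i : ℕ) + 1))
          (fun j : Fin q => Sum.inr ((j : ℕ) + 1))) i) ω) ∂Pr := by
      refine integral_congr_ae (Filter.Eventually.of_forall fun ω => ?_)
      simp only [hf1def, Fin.addCases_left, Fin.addCases_right]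
    rw [h1, h2]
    refine exchangeable_integral Z hmeas hindep hid
      (Fin.addCases (motive := fun _ => ℕ ⊕ ℕ) (fun i : Fin p => Sum.inr (q + (i : ℕ) + 1))
        (fun j : Fin q => Sum.inl (p + (j : ℕ) + 1)))
      (Fin.addCases (motive := fun _ => ℕ ⊕ ℕ) (fun i : Fin p => Sum.inl ((i : ℕ) + 1))
        (fun j : Fin q => Sum.inr ((j : ℕ) + 1)))
      ?_ ?_
      (fun v : Fin (p + q) → 𝔸 => alignScore2 S δ
        (fun i => v (Fin.castAdd q i)) (fun j => v (Fin.natAdd p j)))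
    · refine fin_addCases_injective ?_ ?_ ?_
      · intro i j hij
        simp only [Sum.inr.injEq] at hij
        exact Fin.ext (by omega)
      · intro i j hij
        simp only [Sum.inl.injEq] at hij
        exact Fin.ext (by omega)
      · intro i j
        simp
    · refine fin_addCases_injective ?_ ?_ ?_
      · intro i j hij
        simp only [Sum.inl.injEq] at hij
        exact Fin.ext (by omega)
      · intro i j hij
        simp only [Sum.inr.injEq] at hij
        exact Fin.ext (by omega)
      · intro i j
        simp
  -- put everything together
  have hmono : (∫ ω, f1 ω ∂Pr) + ∫ ω, f2 ω ∂Pr ≤ ∫ ω, F ω ∂Pr := by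
    rw [← integral_add hint1 hint2]
    exact integral_mono (hint1.add hint2) hintF hpoint
  have hfinal : (∫ ω, F ω ∂Pr) = ∫ ω, alignScore S δ
      (fun i : Fin (2 * n) => Z (Sum.inl ((i : ℕ) + 1)) ω)
      (fun i : Fin (2 * n) => Z (Sum.inr ((i : ℕ) + 1)) ω) ∂Pr := by
    refine integral_congr_ae (Filter.Eventually.of_forall fun ω => ?_)
    rw [hFdef]
    exact (alignScore_eq_alignScore2 S δ _ _).symm
  rw [← hfinal]
  rw [heq] at hmono
  linarith
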